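/- (Equation (3.13)) Let μ be a nonzero purely imaginary complex number and suppose the complex matrix μ⁻¹D⁻¹ + Iinv is invertible. Then the complex number z(μ) := eᵀ(μ⁻¹D⁻¹ + Iinv)⁻¹e satisfies |z(μ) − 1| = 1, i.e. z(μ) lies on the circle of radius 1 centered at 1. -/

import Mathlib

open Matrix

/-- The sinc integrand `sin(πt)/(πt)`, extended by the value 1 at `t = 0`. -/
noncomputable def sincFn (t : ℝ) : ℝ :=
  if t = 0 then 1 else Real.sin (Real.pi * t) / (Real.pi * t)

/-- The `m × m` Toeplitz matrix `Iinv(k,l) = 1/2 + ∫₀^{k-l} sin(πt)/(πt) dt`. -/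
noncomputable def IinvMat (m : ℕ) : Matrix (Fin m) (Fin m) ℝ :=
  fun k l => 1 / 2 + ∫ t in (0 : ℝ)..((k : ℝ) - (l : ℝ)), sincFn t

/-- The skew-symmetric part `S = (Iinv - Iinvᵀ)/2`. -/
noncomputable def Smat (m : ℕ) : Matrix (Fin m) (Fin m) ℝ :=
  (2 : ℝ)⁻¹ • (IinvMat m - (IinvMat m)ᵀ)

/-- The all-ones vector `e ∈ ℝ^m`. -/
def eVec (m : ℕ) : Fin m → ℝ := fun _ => 1

lemma sincFn_neg (t : ℝ) : sincFn (-t) = sincFn t := by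
  unfold sincFn
  rcases eq_or_ne t 0 with h | h
  · simp [h]
  · rw [if_neg (neg_ne_zero.mpr h), if_neg h, mul_neg, Real.sin_neg, neg_div_neg_eq]

lemma sinc_int_odd (x : ℝ) : (∫ t in (0:ℝ)..(-x), sincFn t) = - ∫ t in (0:ℝ)..x, sincFn t := by
  have h : (∫ t in (0:ℝ)..x, sincFn t) = ∫ t in (0:ℝ)..x, sincFn (-t) := by
    simp [sincFn_neg]
  rw [h, intervalIntegral.integral_comp_neg, neg_zero, intervalIntegral.integral_symm]

lemma Iinv_add (m : ℕ) (k l : Fin m) : IinvMat m k l + IinvMat m l k = 1 := by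
  unfold IinvMat
  have h : ((l : ℝ) - (k : ℝ)) = -((k : ℝ) - (l : ℝ)) := by ring
  rw [h, sinc_int_odd]
  ring


/-- The all-ones vector in `ℂ^m`. -/
def eVecC (m : ℕ) : Fin m → ℂ := fun _ => 1

theorem stmt11 (m : ℕ) (d : Fin m → ℝ) (hd : ∀ j, 0 < d j)
    (μ : ℂ) (hμ0 : μ ≠ 0) (hμim : μ.re = 0) :
    let Dc : Matrix (Fin m) (Fin m) ℂ := (Matrix.diagonal d).map Complex.ofReal
    let Mc : Matrix (Fin m) (Fin m) ℂ := μ⁻¹ • Dc⁻¹ + (IinvMat m).map Complex.ofReal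
    IsUnit Mc →
      ‖eVecC m ⬝ᵥ Mc⁻¹.mulVec (eVecC m) - 1‖ = 1 := by
  intro Dc Mc hMc
  set v : Fin m → ℂ := Mc⁻¹.mulVec (eVecC m) with hvdef
  set z : ℂ := eVecC m ⬝ᵥ v with hz
  -- Mc v = e
  have hdet : IsUnit Mc.det := (Matrix.isUnit_iff_isUnit_det Mc).mp hMc
  have hv : Mc.mulVec v = eVecC m := by
    rw [hvdef, Matrix.mulVec_mulVec, Matrix.mul_nonsing_inv _ hdet, Matrix.one_mulVec]
  -- conj μ⁻¹ = -μ⁻¹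
  have hconjμ : (starRingEnd ℂ) μ⁻¹ = -μ⁻¹ := by
    rw [map_inv₀, ← inv_neg]
    congr 1
    apply Complex.ext <;> simp [hμim]
  -- Dcᴴ = Dc
  have hDc : Dc = Matrix.diagonal (fun i => (d i : ℂ)) := by
    simp [Dc, Matrix.diagonal_map Complex.ofReal_zero, Function.comp]
  have hDH : Dcᴴ = Dc := by
    rw [hDc, Matrix.diagonal_conjTranspose,
      show (star fun i => ((d i : ℝ) : ℂ)) = fun i => ((d i : ℝ) : ℂ) from
        funext fun i => Complex.conj_ofReal (d i)]
  have hDinvH : (Dc⁻¹)ᴴ = Dc⁻¹ := by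
    rw [Matrix.conjTranspose_nonsing_inv, hDH]
  -- Mcᴴ = E - Mc
  have hMH : Mcᴴ = (Matrix.of fun _ _ => (1:ℂ)) - Mc := by
    have h1 : Mcᴴ = (starRingEnd ℂ) μ⁻¹ • (Dc⁻¹)ᴴ + ((IinvMat m).map Complex.ofReal)ᴴ := by
      simp [Mc, Matrix.conjTranspose_add, Matrix.conjTranspose_smul]
    rw [h1, hDinvH, hconjμ]
    ext k l
    have h2 := Iinv_add m k l
    simp only [Matrix.add_apply, Matrix.smul_apply, Matrix.sub_apply, Matrix.of_apply,
      Matrix.conjTranspose_apply, Matrix.map_apply, Complex.conj_ofReal, Mc, smul_eq_mul,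
      neg_mul]
    have : ((IinvMat m l k : ℝ) : ℂ) = 1 - ((IinvMat m k l : ℝ) : ℂ) := by
      have : IinvMat m l k = 1 - IinvMat m k l := by linarith
      rw [this]; push_cast; ring
    rw [this, star_sub, star_one, Complex.star_def, Complex.conj_ofReal]; ring
  -- key conjugation identity
  have key : star v ⬝ᵥ Mcᴴ.mulVec v = (starRingEnd ℂ) (star v ⬝ᵥ Mc.mulVec v) := by
    conv_rhs => rw [show (starRingEnd ℂ) (star v ⬝ᵥ Mc.mulVec v) = star (star v ⬝ᵥ Mc.mulVec v) from rfl,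
      Matrix.star_dotProduct, star_star, Matrix.star_mulVec, ← Matrix.dotProduct_mulVec]
  -- Mc side
  have h3 : star v ⬝ᵥ Mc.mulVec v = (starRingEnd ℂ) z := by
    rw [hv, hz]
    simp [dotProduct, eVecC, map_sum]
  -- E side
  have h4 : star v ⬝ᵥ ((Matrix.of fun _ _ => (1:ℂ)) : Matrix (Fin m) (Fin m) ℂ).mulVec v
      = (starRingEnd ℂ) z * z := by
    rw [hz]
    simp only [dotProduct, Matrix.mulVec, Matrix.of_apply, eVecC, map_sum, one_mul,
      Finset.sum_mul, Finset.mul_sum, Pi.star_apply, Complex.star_def]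
    rw [Finset.sum_comm]
  have h5 : (starRingEnd ℂ) z * z - (starRingEnd ℂ) z = z := by
    have h := key
    rw [hMH, Matrix.sub_mulVec, dotProduct_sub, h3, h4, Complex.conj_conj] at h
    exact h
  have h6 : (z - 1) * (starRingEnd ℂ) (z - 1) = 1 := by
    rw [map_sub, _root_.map_one]
    linear_combination h5
  have h7 : Complex.normSq (z - 1) = 1 := by
    have h := Complex.mul_conj (z - 1)
    rw [h6] at h
    exact_mod_cast h.symm
  rw [Complex.norm_def, h7, Real.sqrt_one]
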